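/- For every r ≥ 3 and c > C(r,2), the Berge-Ramsey number R_r(Berge-K_n; c) grows exponentially in n; in particular it is not bounded above by any polynomial in n. Concretely, for every constant d and every sufficiently large n, R_r(Berge-K_n; c) > n^d. -/

import Mathlib

/-- `χ` contains a monochromatic Berge copy of `K_n`. -/
def HasMonoBerge (r n c N : ℕ) (χ : Finset (Fin N) → Fin c) : Prop :=
  ∃ (S : Finset (Fin N)) (k : Fin c) (E : Fin N → Fin N → Finset (Fin N)),
    S.card = n ∧
    (∀ u ∈ S, ∀ v ∈ S, u ≠ v →
      (E u v).card = r ∧ u ∈ E u v ∧ v ∈ E u v ∧ χ (E u v) = k ∧ E u v = E v u) ∧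
    (∀ u ∈ S, ∀ v ∈ S, ∀ u' ∈ S, ∀ v' ∈ S, u ≠ v → u' ≠ v' →
      E u v = E u' v' → ({u, v} : Finset (Fin N)) = {u', v'})

/-- The Berge-Ramsey number `R_r(Berge-K_n; c)`. -/
noncomputable def bergeRamsey (r n c : ℕ) : ℕ :=
  sInf {N | ∀ χ : Finset (Fin N) → Fin c, HasMonoBerge r n c N χ}

open Finset

section BRxAux

lemma pigeonBRx {α : Type*} {c m : ℕ} (s : Finset α) (f : α → Fin c)
    (h : c * m < s.card) : ∃ k : Fin c, m < (s.filter (fun a => f a = k)).card := by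
  classical
  by_contra hcon
  push_neg at hcon
  have hsum : s.card = ∑ k ∈ (Finset.univ : Finset (Fin c)), (s.filter (fun a => f a = k)).card :=
    Finset.card_eq_sum_card_fiberwise (fun x _ => Finset.mem_univ _)
  have hle : s.card ≤ ∑ _k ∈ (Finset.univ : Finset (Fin c)), m := by
    rw [hsum]; exact Finset.sum_le_sum fun k _ => hcon k
  simp only [Finset.sum_const, Finset.card_univ, Fintype.card_fin, smul_eq_mul] at hle
  omega

lemma prehomBRx {V : Type*} [DecidableEq V] {c : ℕ} (hc : 0 < c) (f : V → V → Fin c) :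
    ∀ (t : ℕ) (A : Finset V), (c+1)^t ≤ A.card →
    ∃ (x : Fin t → V) (g : Fin t → Fin c), Function.Injective x ∧ (∀ i, x i ∈ A) ∧
      ∀ i j : Fin t, i < j → f (x i) (x j) = g i := by
  intro t
  induction t with
  | zero =>
    intro A _
    exact ⟨Fin.elim0, Fin.elim0, fun i => i.elim0, fun i => i.elim0, fun i => i.elim0⟩
  | succ t ih =>
    intro A hA
    have hpow : (1:ℕ) ≤ (c+1)^t := Nat.one_le_pow _ _ (by omega)
    have hA0 : A.Nonempty := by
      apply Finset.card_pos.1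
      have : (1:ℕ) ≤ (c+1)^(t+1) := Nat.one_le_pow _ _ (by omega)
      omega
    obtain ⟨a, ha⟩ := hA0
    have hcard : c * ((c+1)^t - 1) < (A.erase a).card := by
      have h1 : (A.erase a).card = A.card - 1 := Finset.card_erase_of_mem ha
      have h2 : (c+1)^(t+1) = c * (c+1)^t + (c+1)^t := by ring
      have h3 : c * ((c+1)^t - 1) + c = c * (c+1)^t := by
        have e1 : c * 1 ≤ c * (c+1)^t := Nat.mul_le_mul_left c hpow
        rw [Nat.mul_sub]; omega
      have e1 : c * 1 ≤ c * (c+1)^t := Nat.mul_le_mul_left c hpow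
      omega
    obtain ⟨k, hk⟩ := pigeonBRx (A.erase a) (fun v => f a v) hcard
    set B := (A.erase a).filter (fun v => f a v = k) with hBdef
    have hBcard : (c+1)^t ≤ B.card := by omega
    obtain ⟨x', g', hinj, hmem, hcol⟩ := ih B hBcard
    refine ⟨Fin.cons a x', Fin.cons k g', ?_, ?_, ?_⟩
    · rw [Fin.cons_injective_iff]
      constructor
      · rintro ⟨i, hi⟩
        have := hmem i
        rw [hi] at this
        have : a ∈ A.erase a := Finset.mem_of_mem_filter _ this
        exact (Finset.notMem_erase a A) this
      · exact hinj
    · intro i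
      refine Fin.cases ?_ ?_ i
      · simpa using ha
      · intro i'
        simp only [Fin.cons_succ]
        have := hmem i'
        exact Finset.mem_of_mem_erase (Finset.mem_of_mem_filter _ this)
    · intro i j hij
      rcases Fin.eq_zero_or_eq_succ j with rfl | ⟨j', rfl⟩
      · exact absurd hij (by simp)
      rcases Fin.eq_zero_or_eq_succ i with rfl | ⟨i', rfl⟩
      · simp only [Fin.cons_succ, Fin.cons_zero]
        exact (Finset.mem_filter.1 (hmem j')).2
      · simp only [Fin.cons_succ]
        exact hcol i' j' (by rwa [Fin.succ_lt_succ_iff] at hij)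

lemma ramsey_pairsBRx {N c n : ℕ} (hc : 0 < c) (hN : (c+1)^(c*(n-1)+1) ≤ N)
    (χp : Finset (Fin N) → Fin c) :
    ∃ (S : Finset (Fin N)) (k : Fin c), S.card = n ∧
      ∀ u ∈ S, ∀ v ∈ S, u ≠ v → χp {u, v} = k := by
  obtain ⟨x, g, hinj, _hmem, hcol⟩ := prehomBRx hc (fun u v => χp {u,v}) (c*(n-1)+1)
    Finset.univ (by simpa using hN)
  have hcard : c * (n-1) < (Finset.univ : Finset (Fin (c*(n-1)+1))).card := by simp
  obtain ⟨k, hk⟩ := pigeonBRx Finset.univ g hcard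
  obtain ⟨I, hIsub, hIcard⟩ := Finset.exists_subset_card_eq
    (show n ≤ ((Finset.univ : Finset (Fin (c*(n-1)+1))).filter (fun i => g i = k)).card by omega)
  refine ⟨I.image x, k, ?_, ?_⟩
  · rw [Finset.card_image_of_injective _ hinj, hIcard]
  · intro u hu v hv huv
    obtain ⟨i, hi, rfl⟩ := Finset.mem_image.1 hu
    obtain ⟨j, hj, rfl⟩ := Finset.mem_image.1 hv
    have hij : i ≠ j := fun h => huv (by rw [h])
    have hgi : g i = k := (Finset.mem_filter.1 (hIsub hi)).2
    have hgj : g j = k := (Finset.mem_filter.1 (hIsub hj)).2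
    rcases lt_or_gt_of_ne hij with h | h
    · rw [hcol i j h, hgi]
    · rw [Finset.pair_comm, hcol j i h, hgj]

lemma upperBRx_aux (r c n N : ℕ) (hr : 3 ≤ r) (hc : 0 < c)
    (hNR : (c+1)^(c*(n-1)+1) ≤ N) (hN2 : c * (n.choose 2 + 1) + r ≤ N)
    (χ : Finset (Fin N) → Fin c) : HasMonoBerge r n c N χ := by
  classical
  set m : ℕ := n.choose 2 + 1 with hm
  -- candidate edges for a pair-set p and color k
  set cand : Finset (Fin N) → Fin c → Finset (Finset (Fin N)) :=
    fun p k => ((Finset.univ : Finset (Fin N)).powersetCard r).filter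
      (fun e => p ⊆ e ∧ χ e = k) with hcand
  -- every 2-set has a rich color
  have hrich : ∀ u v : Fin N, u ≠ v → ∃ k : Fin c, m ≤ (cand {u, v} k).card := by
    intro u v huv
    have hcard2 : ({u, v} : Finset (Fin N)).card = 2 := Finset.card_pair huv
    have hNN : (Finset.univ : Finset (Fin N)).card = N := by simp
    have hsd : r - 3 ≤ ((Finset.univ : Finset (Fin N)) \ {u, v}).card := by
      rw [Finset.card_sdiff_of_subset (Finset.subset_univ _), hcard2, hNN]
      omega
    obtain ⟨F, hFsub, hFcard⟩ := Finset.exists_subset_card_eq hsd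
    set B : Finset (Fin N) := {u, v} ∪ F with hBdef
    have hdisj : Disjoint ({u, v} : Finset (Fin N)) F := by
      refine Finset.disjoint_left.2 fun a ha haF => ?_
      exact (Finset.mem_sdiff.1 (hFsub haF)).2 ha
    have hBcard : B.card = r - 1 := by
      rw [hBdef, Finset.card_union_of_disjoint hdisj, hcard2, hFcard]; omega
    set W : Finset (Fin N) := Finset.univ \ B with hWdef
    have hWcard : W.card = N - (r - 1) := by
      rw [hWdef, Finset.card_sdiff_of_subset (Finset.subset_univ _), hBcard, hNN]
    set fam : Finset (Finset (Fin N)) := W.image (fun w => insert w B) with hfam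
    have hinj : Set.InjOn (fun w => insert w B) W := by
      intro w hw w' hw' he
      have hwB : w ∉ B := (Finset.mem_sdiff.1 hw).2
      have hw'B : w' ∉ B := (Finset.mem_sdiff.1 hw').2
      have he2 : insert w B = insert w' B := he
      have : w ∈ insert w' B := by rw [← he2]; exact Finset.mem_insert_self _ _
      rcases Finset.mem_insert.1 this with h | h
      · exact h
      · exact absurd h hwB
    have hfamcard : fam.card = N - (r - 1) := by
      rw [hfam, Finset.card_image_of_injOn hinj, hWcard]
    have hmlt : c * m < fam.card := by
      rw [hfamcard]; omega
    obtain ⟨k, hk⟩ := pigeonBRx fam χ hmlt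
    refine ⟨k, ?_⟩
    have hsub : fam.filter (fun e => χ e = k) ⊆ cand {u, v} k := by
      intro e he
      obtain ⟨hef, heχ⟩ := Finset.mem_filter.1 he
      obtain ⟨w, hw, rfl⟩ := Finset.mem_image.1 hef
      have hwB : w ∉ B := (Finset.mem_sdiff.1 hw).2
      refine Finset.mem_filter.2 ⟨Finset.mem_powersetCard.2 ⟨Finset.subset_univ _, ?_⟩, ?_, heχ⟩
      · rw [Finset.card_insert_of_notMem hwB, hBcard]; omega
      · refine Finset.Subset.trans ?_ (Finset.subset_insert _ _)
        rw [hBdef]; exact Finset.subset_union_left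
    calc m ≤ (fam.filter (fun e => χ e = k)).card := by omega
    _ ≤ (cand {u, v} k).card := Finset.card_le_card hsub
  -- pair coloring by a rich color
  set kfun : Finset (Fin N) → Fin c := fun p =>
    if h : ∃ k : Fin c, m ≤ (cand p k).card then h.choose else ⟨0, hc⟩ with hkfun
  have hkfun_spec : ∀ u v : Fin N, u ≠ v → m ≤ (cand {u, v} (kfun {u, v})).card := by
    intro u v huv
    have h := hrich u v huv
    rw [hkfun]
    simp only [dif_pos h]
    exact h.choose_spec
  obtain ⟨S, k₀, hScard, hSk⟩ := ramsey_pairsBRx hc hNR kfun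
  -- Hall's theorem to pick distinct edges
  set ι := {p : Finset (Fin N) // p ∈ S.powersetCard 2}
  have hpair : ∀ p : ι, ∃ u v : Fin N, u ≠ v ∧ u ∈ S ∧ v ∈ S ∧ p.1 = {u, v} := by
    rintro ⟨p, hp⟩
    obtain ⟨hps, hpc⟩ := Finset.mem_powersetCard.1 hp
    obtain ⟨u, v, huv, rfl⟩ := Finset.card_eq_two.1 hpc
    exact ⟨u, v, huv, hps (by simp), hps (by simp), rfl⟩
  set t : ι → Finset (Finset (Fin N)) := fun p => cand p.1 k₀ with ht
  have htcard : ∀ p : ι, m ≤ (t p).card := by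
    intro p
    obtain ⟨u, v, huv, huS, hvS, hpe⟩ := hpair p
    have := hkfun_spec u v huv
    rw [hSk u huS v hvS huv] at this
    show m ≤ (cand p.1 k₀).card
    rw [hpe]; exact this
  have hhall : ∀ s : Finset ι, s.card ≤ (s.biUnion t).card := by
    intro s
    rcases s.eq_empty_or_nonempty with rfl | ⟨p₀, hp₀⟩
    · simp
    · calc s.card ≤ Fintype.card ι := (Finset.card_le_univ s).trans_eq Finset.card_univ
      _ = (S.powersetCard 2).card := Fintype.card_coe _
      _ = n.choose 2 := by rw [Finset.card_powersetCard, hScard]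
      _ ≤ (t p₀).card := by have := htcard p₀; omega
      _ ≤ (s.biUnion t).card := Finset.card_le_card (Finset.subset_biUnion_of_mem t hp₀)
  obtain ⟨f, hfinj, hfmem⟩ := (Finset.all_card_le_biUnion_card_iff_exists_injective t).1 hhall
  -- build E
  set Efun : Finset (Fin N) → Finset (Fin N) := fun p =>
    if h : p ∈ S.powersetCard 2 then f ⟨p, h⟩ else ∅ with hEfun
  refine ⟨S, k₀, fun u v => Efun {u, v}, hScard, ?_, ?_⟩
  · intro u huS v hvS huv
    show (Efun {u, v}).card = r ∧ u ∈ Efun {u, v} ∧ v ∈ Efun {u, v} ∧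
      χ (Efun {u, v}) = k₀ ∧ Efun {u, v} = Efun {v, u}
    have hp : ({u, v} : Finset (Fin N)) ∈ S.powersetCard 2 :=
      Finset.mem_powersetCard.2 ⟨Finset.insert_subset huS (Finset.singleton_subset_iff.2 hvS),
        Finset.card_pair huv⟩
    have hef : Efun {u, v} = f ⟨{u, v}, hp⟩ := by rw [hEfun]; exact dif_pos hp
    have hmem := hfmem ⟨{u, v}, hp⟩
    rw [ht] at hmem
    obtain ⟨hpow, hsubp, hχ⟩ := Finset.mem_filter.1 hmem
    obtain ⟨_, hcardr⟩ := Finset.mem_powersetCard.1 hpow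
    refine ⟨by rw [hef]; exact hcardr, ?_, ?_, by rw [hef]; exact hχ, ?_⟩
    · rw [hef]; exact hsubp (by simp)
    · rw [hef]; exact hsubp (by simp)
    · show Efun {u, v} = Efun {v, u}
      rw [Finset.pair_comm]
  · intro u huS v hvS u' hu'S v' hv'S huv hu'v' heq
    have hp : ({u, v} : Finset (Fin N)) ∈ S.powersetCard 2 :=
      Finset.mem_powersetCard.2 ⟨Finset.insert_subset huS (Finset.singleton_subset_iff.2 hvS),
        Finset.card_pair huv⟩
    have hp' : ({u', v'} : Finset (Fin N)) ∈ S.powersetCard 2 :=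
      Finset.mem_powersetCard.2 ⟨Finset.insert_subset hu'S (Finset.singleton_subset_iff.2 hv'S),
        Finset.card_pair hu'v'⟩
    have heqE : Efun {u, v} = Efun {u', v'} := heq
    have heq2 : f ⟨{u, v}, hp⟩ = f ⟨{u', v'}, hp'⟩ := by
      have h1 : Efun {u, v} = f ⟨{u, v}, hp⟩ := by rw [hEfun]; exact dif_pos hp
      have h2 : Efun {u', v'} = f ⟨{u', v'}, hp'⟩ := by rw [hEfun]; exact dif_pos hp'
      rw [← h1, ← h2]; exact heqE
    exact congrArg Subtype.val (hfinj heq2)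


lemma upperBRx (r c n : ℕ) (hr : 3 ≤ r) (hc : 0 < c) :
    ∃ N : ℕ, ∀ χ : Finset (Fin N) → Fin c, HasMonoBerge r n c N χ :=
  ⟨(c+1)^(c*(n-1)+1) + c * (n.choose 2 + 1) + r,
    fun χ => upperBRx_aux r c n _ hr hc (by omega) (by omega) χ⟩

lemma count_badBRx {N c n : ℕ} (hc : 2 ≤ c) (S : Finset (Fin N)) (hS : S.card = n) (k : Fin c) :
    ((Finset.univ : Finset (Finset (Fin N) → Fin c)).filter
      (fun g => ∀ p ∈ S.powersetCard 2, g p ≠ k)).card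
      = (c-1) ^ (n.choose 2) * c ^ (2^N - n.choose 2) := by
  classical
  rw [← Fintype.card_subtype]
  have e1 : Fintype.card {g : Finset (Fin N) → Fin c // ∀ p ∈ S.powersetCard 2, g p ≠ k}
      = Fintype.card (∀ _p : Finset (Fin N), {x : Fin c // _p ∈ S.powersetCard 2 → x ≠ k}) :=
    Fintype.card_congr (Equiv.subtypePiEquivPi
      (p := fun (p : Finset (Fin N)) (x : Fin c) => p ∈ S.powersetCard 2 → x ≠ k))
  rw [e1, Fintype.card_pi]
  have e2 : ∀ p : Finset (Fin N),
      Fintype.card {x : Fin c // p ∈ S.powersetCard 2 → x ≠ k}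
        = if p ∈ S.powersetCard 2 then c - 1 else c := by
    intro p
    by_cases hp : p ∈ S.powersetCard 2
    · rw [if_pos hp]
      have : ∀ x : Fin c, (p ∈ S.powersetCard 2 → x ≠ k) ↔ x ≠ k := fun x => by simp [hp]
      rw [Fintype.card_congr (Equiv.subtypeEquivRight this), Fintype.card_subtype]
      rw [Finset.filter_ne' Finset.univ k, Finset.card_erase_of_mem (Finset.mem_univ _)]
      simp
    · rw [if_neg hp]
      calc Fintype.card {x : Fin c // p ∈ S.powersetCard 2 → x ≠ k}
          = Fintype.card (Fin c) :=
            Fintype.card_congr (Equiv.subtypeUnivEquiv (fun x => by simp [hp]))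
      _ = c := Fintype.card_fin c
  rw [Finset.prod_congr rfl (fun p _ => e2 p), Finset.prod_ite]
  rw [Finset.prod_const, Finset.prod_const]
  have e3 : (Finset.univ.filter (fun p => p ∈ S.powersetCard 2)) = S.powersetCard 2 := by
    ext p; simp
  have e4 : (S.powersetCard 2).card = n.choose 2 := by rw [Finset.card_powersetCard, hS]
  have e5 : (Finset.univ.filter (fun p => ¬ p ∈ S.powersetCard 2)).card
      = 2^N - n.choose 2 := by
    rw [Finset.filter_not, Finset.card_sdiff_of_subset (Finset.filter_subset _ _), e3, e4,
      Finset.card_univ, Fintype.card_finset, Fintype.card_fin]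
  rw [e3, e4, e5]

lemma exists_goodBRx {N c n : ℕ} (hc : 2 ≤ c)
    (harith : (N.choose n) * c * ((c-1) ^ (n.choose 2) * c ^ (2^N - n.choose 2)) < c ^ (2^N)) :
    ∃ g : Finset (Fin N) → Fin c, ∀ S : Finset (Fin N), S.card = n → ∀ k : Fin c,
      ∃ p ∈ S.powersetCard 2, g p = k := by
  classical
  set Bad := (Finset.univ : Finset (Finset (Fin N) → Fin c)).filter
    (fun g => ∃ S ∈ (Finset.univ : Finset (Fin N)).powersetCard n, ∃ k : Fin c,
      ∀ p ∈ S.powersetCard 2, g p ≠ k) with hBad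
  have hsub : Bad ⊆ (((Finset.univ : Finset (Fin N)).powersetCard n) ×ˢ
      (Finset.univ : Finset (Fin c))).biUnion
      (fun Sk => (Finset.univ : Finset (Finset (Fin N) → Fin c)).filter
        (fun g => ∀ p ∈ Sk.1.powersetCard 2, g p ≠ Sk.2)) := by
    intro g hg
    obtain ⟨-, S, hSmem, k, hk⟩ := Finset.mem_filter.1 hg
    refine Finset.mem_biUnion.2 ⟨(S, k), ?_, ?_⟩
    · exact Finset.mem_product.2 ⟨hSmem, Finset.mem_univ _⟩
    · exact Finset.mem_filter.2 ⟨Finset.mem_univ _, hk⟩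
  have hcard : Bad.card < Fintype.card (Finset (Fin N) → Fin c) := by
    have h1 : Bad.card ≤ ∑ Sk ∈ (((Finset.univ : Finset (Fin N)).powersetCard n) ×ˢ
        (Finset.univ : Finset (Fin c))),
        ((Finset.univ : Finset (Finset (Fin N) → Fin c)).filter
          (fun g => ∀ p ∈ Sk.1.powersetCard 2, g p ≠ Sk.2)).card :=
      (Finset.card_le_card hsub).trans (Finset.card_biUnion_le)
    have h2 : ∀ Sk ∈ (((Finset.univ : Finset (Fin N)).powersetCard n) ×ˢ
        (Finset.univ : Finset (Fin c))),
        ((Finset.univ : Finset (Finset (Fin N) → Fin c)).filter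
          (fun g => ∀ p ∈ Sk.1.powersetCard 2, g p ≠ Sk.2)).card
        = (c-1) ^ (n.choose 2) * c ^ (2^N - n.choose 2) := by
      rintro ⟨S, k⟩ hSk
      obtain ⟨hS, -⟩ := Finset.mem_product.1 hSk
      exact count_badBRx hc S (Finset.mem_powersetCard.1 hS).2 k
    rw [Finset.sum_congr rfl h2, Finset.sum_const, Finset.card_product] at h1
    rw [Finset.card_powersetCard, Finset.card_univ, Finset.card_univ, Fintype.card_fin,
      Fintype.card_fin] at h1
    have h3 : Fintype.card (Finset (Fin N) → Fin c) = c ^ (2^N) := by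
      rw [Fintype.card_fun, Fintype.card_finset, Fintype.card_fin, Fintype.card_fin]
    rw [h3]
    calc Bad.card ≤ N.choose n * c * ((c-1) ^ (n.choose 2) * c ^ (2^N - n.choose 2)) := by
          rw [smul_eq_mul] at h1; rw [mul_assoc] at h1 ⊢; exact h1.trans (le_of_eq (by ring))
    _ < c ^ (2^N) := harith
  have hex : ∃ g : Finset (Fin N) → Fin c, g ∉ Bad := by
    by_contra hcon
    push_neg at hcon
    have : (Finset.univ : Finset (Finset (Fin N) → Fin c)) ⊆ Bad := fun g _ => hcon g
    have := Finset.card_le_card this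
    rw [Finset.card_univ] at this
    omega
  obtain ⟨g, hg⟩ := hex
  refine ⟨g, fun S hScard k => ?_⟩
  by_contra hcon
  push_neg at hcon
  exact hg (Finset.mem_filter.2 ⟨Finset.mem_univ _,
    ⟨S, Finset.mem_powersetCard.2 ⟨Finset.subset_univ _, hScard⟩, k, fun p hp => hcon p hp⟩⟩)

lemma lower_mainBRx {N c n r : ℕ} (hr : 3 ≤ r) (hrc : r.choose 2 < c)
    (harith : (N.choose n) * c * ((c-1) ^ (n.choose 2) * c ^ (2^N - n.choose 2)) < c ^ (2^N)) :
    ∃ χ : Finset (Fin N) → Fin c, ¬ HasMonoBerge r n c N χ := by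
  classical
  have hc2 : 2 ≤ c := by
    have : 3 ≤ r.choose 2 := by
      calc 3 = (3).choose 2 := by norm_num
      _ ≤ r.choose 2 := Nat.choose_le_choose 2 hr
    omega
  have hc0 : 0 < c := by omega
  obtain ⟨g, hg⟩ := exists_goodBRx hc2 harith
  set χ : Finset (Fin N) → Fin c := fun e =>
    if h : ∃ k : Fin c, ∀ p ∈ e.powersetCard 2, g p ≠ k then h.choose else ⟨0, hc0⟩ with hχ
  refine ⟨χ, ?_⟩
  rintro ⟨S, k, E, hScard, h1, -⟩
  -- good g: some pair of S has color k
  obtain ⟨p, hpmem, hpk⟩ := hg S hScard k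
  obtain ⟨hpS, hpcard⟩ := Finset.mem_powersetCard.1 hpmem
  obtain ⟨u, v, huv, rfl⟩ := Finset.card_eq_two.1 hpcard
  have huS : u ∈ S := hpS (by simp)
  have hvS : v ∈ S := hpS (by simp)
  obtain ⟨hEcard, huE, hvE, hEχ, -⟩ := h1 u huS v hvS huv
  -- χ (E u v) avoids all pair colors of E u v
  have hexk : ∃ k' : Fin c, ∀ p ∈ (E u v).powersetCard 2, g p ≠ k' := by
    by_contra hcon
    push_neg at hcon
    have hsub : (Finset.univ : Finset (Fin c)) ⊆ ((E u v).powersetCard 2).image g := by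
      intro k' _
      obtain ⟨p, hp, hgp⟩ := hcon k'
      exact Finset.mem_image.2 ⟨p, hp, hgp⟩
    have hle := Finset.card_le_card hsub
    rw [Finset.card_univ, Fintype.card_fin] at hle
    have him := Finset.card_image_le (s := (E u v).powersetCard 2) (f := g)
    rw [Finset.card_powersetCard, hEcard] at him
    omega
  have hspec : ∀ p ∈ (E u v).powersetCard 2, g p ≠ χ (E u v) := by
    rw [hχ]
    simp only [dif_pos hexk]
    exact hexk.choose_spec
  have hpmem' : ({u, v} : Finset (Fin N)) ∈ (E u v).powersetCard 2 :=
    Finset.mem_powersetCard.2 ⟨Finset.insert_subset huE (Finset.singleton_subset_iff.2 hvE),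
      Finset.card_pair huv⟩
  exact hspec {u, v} hpmem' (by rw [hEχ]; exact hpk)

lemma two_mul_add_one_le_two_powBRx : ∀ m : ℕ, 3 ≤ m → 2*m + 1 ≤ 2^m := by
  intro m hm
  induction m with
  | zero => omega
  | succ t ih =>
    rcases Nat.lt_or_ge t 3 with h | h
    · interval_cases t <;> simp_all <;> omega
    · have := ih h
      have h2 : (1:ℕ) ≤ 2^t := Nat.one_le_pow _ _ (by omega)
      rw [pow_succ]
      omega

lemma sq_le_two_powBRx : ∀ m : ℕ, 4 ≤ m → m * m ≤ 2^m := by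
  intro m hm
  induction m with
  | zero => omega
  | succ t ih =>
    rcases Nat.lt_or_ge t 4 with h | h
    · interval_cases t <;> first | omega | norm_num
    · have h1 := ih h
      have h2 := two_mul_add_one_le_two_powBRx t (by omega)
      rw [pow_succ]
      nlinarith
lemma log_le_sqrtBRx {n : ℕ} (hn : 16 ≤ n) : Nat.log 2 n ≤ Nat.sqrt n := by
  set l := Nat.log 2 n with hl
  have h1 : 2^l ≤ n := Nat.pow_log_le_self 2 (by omega)
  have h4 : 4 ≤ l := by
    rw [hl]
    have : (2:ℕ)^4 ≤ n := by omega
    exact (Nat.le_log_iff_pow_le (by norm_num) (by omega)).2 this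
  have h2 : l * l ≤ 2^l := sq_le_two_powBRx l h4
  exact Nat.le_sqrt.2 (h2.trans h1)

lemma binom_lbBRx (q : ℕ) : ∀ m : ℕ, 1 ≤ m → q^m + m * q^(m-1) ≤ (q+1)^m := by
  intro m
  induction m with
  | zero => omega
  | succ t ih =>
    intro _h
    rcases Nat.eq_or_lt_of_le (Nat.zero_le t) with h | h
    · subst h; simp
    · have ht : 1 ≤ t := h
      have ih' := ih ht
      have e2 : (q^t + t * q^(t-1)) * (q+1) ≤ (q+1)^t * (q+1) :=
        Nat.mul_le_mul_right _ ih'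
      rw [← pow_succ] at e2
      have e3 : q^(t-1) * q = q^t := by
        rw [← pow_succ]; congr 1; omega
      have h5 : q^t * q = q^(t+1) := (pow_succ q t).symm
      have e4 : q^(t+1) + (t+1) * q^(t+1-1) ≤ (q^t + t * q^(t-1)) * (q+1) := by
        simp only [Nat.add_sub_cancel]
        set X := q^(t-1) with hX
        rw [← h5, ← e3]
        nlinarith [Nat.zero_le (t*X)]
      exact e4.trans e2
lemma pow_sub_oneBRx (q : ℕ) (hq : 1 ≤ q) : 2 * q^q ≤ (q+1)^q := by
  have := binom_lbBRx q q hq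
  have e : q * q^(q-1) = q^q := by
    rw [mul_comm, ← pow_succ]; congr 1; omega
  omega

lemma pow_div_boundBRx (q P : ℕ) (hq : 1 ≤ q) : 2^(P / q) * q^P ≤ (q+1)^P := by
  set a := P / q with ha
  set b := P % q with hb
  have hP : q * a + b = P := Nat.div_add_mod P q
  calc 2^a * q^P = (2 * q^q)^a * q^b := by
        rw [← hP, pow_add, pow_mul, mul_pow]; ring
  _ ≤ ((q+1)^q)^a * (q+1)^b :=
      Nat.mul_le_mul (Nat.pow_le_pow_left (pow_sub_oneBRx q hq) a)
        (Nat.pow_le_pow_left (by omega) b)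
  _ = (q+1)^(q*a+b) := by rw [← pow_mul, ← pow_add]
  _ = (q+1)^P := by rw [hP]

lemma arithBRx {c d n N : ℕ} (hc : 4 ≤ c)
    (hn : (8*(c-1)*(d+c+1) + 1)^2 + 16 ≤ n) (hnN : n ≤ N) (hNd : N ≤ n^d) :
    (N.choose n) * c * ((c-1) ^ (n.choose 2) * c ^ (2^N - n.choose 2)) < c ^ (2^N) := by
  set q := c - 1 with hqdef
  have hq3 : 3 ≤ q := by omega
  set P := n.choose 2 with hPdef
  set M := 2^N with hMdef
  have hn16 : 16 ≤ n := by omega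
  -- P ≤ M
  have hPM : P ≤ M := by
    have h1 : P ≤ n * n := by
      rw [hPdef, Nat.choose_two_right]
      have := Nat.div_le_self (n * (n-1)) 2
      calc n * (n-1) / 2 ≤ n * (n - 1) := Nat.div_le_self _ _
      _ ≤ n * n := Nat.mul_le_mul_left _ (by omega)
    have h2 : n * n ≤ 2^n := sq_le_two_powBRx n (by omega)
    have h3 : (2:ℕ)^n ≤ 2^N := Nat.pow_le_pow_right (by norm_num) hnN
    omega
  -- key: N.choose n * c < 2^(P/q)
  have hkey : N.choose n * c < 2^(P / q) := by
    set L := Nat.log 2 n + 1 with hL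
    set s := Nat.sqrt n with hs
    have hs1 : 1 ≤ s := by
      rw [hs]; exact Nat.le_sqrt.2 (by omega)
    have hLs : L ≤ s + 1 := by
      rw [hL]
      have := log_le_sqrtBRx hn16
      omega
    -- exponent inequality : L*d*n + c + 1 ≤ P / q
    have hexp : L*d*n + c + 1 ≤ P / q := by
      have h2q : 0 < 2 * q := by omega
      rw [hPdef, Nat.choose_two_right, Nat.div_div_eq_div_mul]
      rw [Nat.le_div_iff_mul_le h2q]
      -- (L*d*n + c + 1) * (2*q) ≤ n * (n-1)
      set B := 8*q*(d+c+1) with hB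
      have hsB : B + 1 ≤ s := by
        rw [hs]
        refine Nat.le_sqrt.2 ?_
        have hBe : B + 1 = 8*q*(d+c+1) + 1 := by rw [hB]
        calc (B+1) * (B+1) = (8*q*(d+c+1) + 1)^2 := by rw [hBe]; ring
        _ ≤ n := by
          have hn' : (8*q*(d+c+1) + 1)^2 + 16 ≤ n := by rw [hqdef]; exact hn
          omega
      have step1 : (L*d*n + c + 1) * (2*q) ≤ n*s*B := by
        have e1 : L*d ≤ (s+1)*d := Nat.mul_le_mul_right d hLs
        have e2 : L*d*n*(2*q) ≤ (s+1)*d*n*(2*q) := by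
          have := Nat.mul_le_mul_right n e1
          exact Nat.mul_le_mul_right _ this
        have e3 : (s+1)*d*n*(2*q) ≤ 2*s*d*n*(2*q) := by
          have : (s+1) ≤ 2*s := by omega
          have := Nat.mul_le_mul_right d this
          have := Nat.mul_le_mul_right n this
          exact Nat.mul_le_mul_right _ this
        have e4 : 2*s*d*n*(2*q) = n*s*(4*q*d) := by ring
        have e5 : (c+1)*(2*q) ≤ n*s*(4*q*c) := by
          have h1 : (c+1)*(2*q) ≤ (2*c)*(2*q) := by
            apply Nat.mul_le_mul_right; omega
          have h2 : (2*c)*(2*q) = 4*q*c := by ring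
          have h3 : 4*q*c ≤ n*s*(4*q*c) := by
            have : 1 ≤ n*s := by
              have : 1 ≤ n := by omega
              exact Nat.one_le_iff_ne_zero.2 (by positivity)
            calc 4*q*c = 1*(4*q*c) := by ring
            _ ≤ (n*s)*(4*q*c) := Nat.mul_le_mul_right _ this
            _ = n*s*(4*q*c) := by ring
          omega
        have e6 : n*s*(4*q*d) + n*s*(4*q*c) ≤ n*s*B := by
          rw [hB]
          have : 4*q*d + 4*q*c ≤ 8*q*(d+c+1) := by ring_nf; omega
          calc n*s*(4*q*d) + n*s*(4*q*c) = n*s*(4*q*d + 4*q*c) := by ring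
          _ ≤ n*s*(8*q*(d+c+1)) := Nat.mul_le_mul_left _ this
        have expand : (L*d*n + c + 1) * (2*q) = L*d*n*(2*q) + (c+1)*(2*q) := by ring
        omega
      have step2 : n*s*B ≤ n*(n-1) := by
        have h1 : s*(B+1) ≤ s*s := Nat.mul_le_mul_left s hsB
        have h2 : s*s ≤ n := Nat.sqrt_le n
        have h3 : s*(B+1) = s*B + s := by ring
        have h4 : s*B ≤ n - 1 := by omega
        calc n*s*B = n*(s*B) := by ring
        _ ≤ n*(n-1) := Nat.mul_le_mul_left _ h4
      omega
    -- now the size chain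
    have hNc : N.choose n ≤ 2^(L*d*n) := by
      calc N.choose n ≤ N^n := Nat.choose_le_pow _ _
      _ ≤ (n^d)^n := Nat.pow_le_pow_left hNd n
      _ ≤ ((2^L)^d)^n := by
          apply Nat.pow_le_pow_left
          apply Nat.pow_le_pow_left
          have := Nat.lt_pow_succ_log_self (b := 2) (by norm_num) n
          rw [hL]; omega
      _ = 2^(L*d*n) := by rw [← pow_mul, ← pow_mul]; congr 1; ring
    have hcc : c ≤ 2^c := le_of_lt (Nat.lt_two_pow_self (n := c))
    calc N.choose n * c ≤ 2^(L*d*n) * 2^c := Nat.mul_le_mul hNc hcc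
    _ = 2^(L*d*n + c) := by rw [← pow_add]
    _ < 2^(L*d*n + c + 1) := by
        apply Nat.pow_lt_pow_right (by norm_num)
        omega
    _ ≤ 2^(P / q) := Nat.pow_le_pow_right (by norm_num) hexp
  -- assemble
  have hqP : 0 < q^P := pow_pos (by omega) P
  have hfinal : N.choose n * c * q^P < c^P := by
    calc N.choose n * c * q^P < 2^(P/q) * q^P :=
      (Nat.mul_lt_mul_right hqP).2 hkey
    _ ≤ (q+1)^P := pow_div_boundBRx q P (by omega)
    _ = c^P := by congr 1; omega
  have hsplit : c^M = c^P * c^(M - P) := by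
    rw [← pow_add]; congr 1; omega
  calc N.choose n * c * (q^P * c^(M-P)) = (N.choose n * c * q^P) * c^(M-P) := by ring
  _ < c^P * c^(M-P) := by
      exact (Nat.mul_lt_mul_right (pow_pos (by omega : 0 < c) _)).2 hfinal
  _ = c^M := hsplit.symm

end BRxAux

/-- For `r ≥ 3` and `c > C(r,2)`, the Berge-Ramsey number `R_r(Berge-K_n; c)` grows
superpolynomially: for every `d` and all sufficiently large `n`, it exceeds `n^d`. -/
theorem stmt13 (r c : ℕ) (hr : 3 ≤ r) (hc : r.choose 2 < c) (d : ℕ) :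
    ∃ n₀ : ℕ, ∀ n ≥ n₀, n ^ d < bergeRamsey r n c := by
  have hc4 : 4 ≤ c := by
    have h3 : 3 ≤ r.choose 2 := by
      calc 3 = Nat.choose 3 2 := by norm_num
      _ ≤ r.choose 2 := Nat.choose_le_choose 2 hr
    omega
  refine ⟨(8*(c-1)*(d+c+1) + 1)^2 + 16, fun n hn => ?_⟩
  have hTne : {N | ∀ χ : Finset (Fin N) → Fin c, HasMonoBerge r n c N χ}.Nonempty := by
    obtain ⟨N, hN⟩ := upperBRx r c n hr (by omega)
    exact ⟨N, hN⟩
  have hmem := Nat.sInf_mem hTne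
  by_contra hcon
  push_neg at hcon
  have hle : sInf {N | ∀ χ : Finset (Fin N) → Fin c, HasMonoBerge r n c N χ} ≤ n ^ d := hcon
  set N₀ := sInf {N | ∀ χ : Finset (Fin N) → Fin c, HasMonoBerge r n c N χ} with hN₀
  rcases Nat.lt_or_ge N₀ n with hlt | hge
  · obtain ⟨S, k, E, hScard, -, -⟩ := hmem (fun _ => (⟨0, by omega⟩ : Fin c))
    have hcard := Finset.card_le_univ S
    simp only [hScard, Finset.card_univ, Fintype.card_fin] at hcard
    omega
  · obtain ⟨χ, hχ⟩ := lower_mainBRx hr hc (arithBRx hc4 hn hge hle)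
    exact hχ (hmem χ)
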